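/- arXiv:1502.06354 — 3 statements merged into one kernel-verified Lean document; each statement's English description precedes it below -/
import Mathlib

section
/- Let Z_1,…,Z_d be i.i.d. exponential random variables with unit mean, and let Z_1^* ≥ Z_2^* ≥ … ≥ Z_d^* be their values sorted in decreasing order. Then for any 1 ≤ m ≤ d, E[∑_{i=1}^m Z_i^*] ≤ m·(log(d/m) + 1). -/
open MeasureTheory ProbabilityTheory

open scoped ENNReal NNReal in
open Real Set Filter Topology in
/-- For `u ≥ 0`, the function `x ↦ max (x - u) 0` is integrable against the unit-rate
exponential measure and its integral is `exp (-u)`. -/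
lemma exp_tail_aux {u : ℝ} (hu : 0 ≤ u) :
    Integrable (fun x => max (x - u) 0) (expMeasure 1) ∧
    ∫ x, max (x - u) 0 ∂(expMeasure 1) = Real.exp (-u) := by
  -- the antiderivative
  set F : ℝ → ℝ := fun x => -(x - u + 1) * Real.exp (-x) with hF
  set g' : ℝ → ℝ := fun x => (x - u) * Real.exp (-x) with hg'
  have hderiv : ∀ x, HasDerivAt F (g' x) x := by
    intro x
    have h1 : HasDerivAt (fun x : ℝ => -(x - u + 1)) (-1) x := by
      exact (((hasDerivAt_id x).sub_const u).add_const 1).neg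
    have h2 : HasDerivAt (fun x : ℝ => Real.exp (-x)) (-Real.exp (-x)) x := by
      simpa using ((hasDerivAt_id x).neg).exp
    have : HasDerivAt F (-1 * Real.exp (-x) + -(x - u + 1) * -Real.exp (-x)) x := h1.mul h2
    convert this using 1
    show (x - u) * Real.exp (-x) = _
    ring
  have htend : Tendsto F atTop (𝓝 0) := by
    have h1 : Tendsto (fun x : ℝ => x * Real.exp (-x)) atTop (𝓝 0) := by
      simpa using tendsto_pow_mul_exp_neg_atTop_nhds_zero 1
    have h2 : Tendsto (fun x : ℝ => Real.exp (-x)) atTop (𝓝 0) :=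
      tendsto_exp_neg_atTop_nhds_zero
    have : Tendsto (fun x : ℝ => -(x * Real.exp (-x)) + (u - 1) * Real.exp (-x)) atTop
        (𝓝 (-(0:ℝ) + (u - 1) * 0)) := (h1.neg).add (h2.const_mul _)
    simpa [hF] using this.congr (fun x => by ring)
  have hg'pos : ∀ x ∈ Ioi u, 0 ≤ g' x := fun x hx =>
    mul_nonneg (by simp [hg']; linarith [mem_Ioi.mp hx]) (Real.exp_nonneg _)
  have hint : IntegrableOn g' (Ioi u) :=
    integrableOn_Ioi_deriv_of_nonneg (hderiv u).continuousAt.continuousWithinAt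
      (fun x _ => hderiv x) hg'pos htend
  have hval : ∫ x in Ioi u, g' x = Real.exp (-u) := by
    rw [integral_Ioi_of_hasDerivAt_of_nonneg (hderiv u).continuousAt.continuousWithinAt
      (fun x _ => hderiv x) hg'pos htend]
    simp [hF]
  -- rewrite the expMeasure integral as a weighted Lebesgue integral
  have hmeas_pdf : Measurable fun x => (exponentialPDFReal 1 x).toNNReal :=
    (measurable_exponentialPDFReal 1).real_toNNReal
  have hpdf_eq : expMeasure 1
      = volume.withDensity (fun x => ((exponentialPDFReal 1 x).toNNReal : ℝ≥0∞)) := rfl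
  -- the weighted integrand equals the indicator of `Ioi u` of `g'`
  have hind : (fun x => ((exponentialPDFReal 1 x).toNNReal : ℝ) • max (x - u) 0)
      = (Ioi u).indicator g' := by
    funext x
    rcases le_or_gt x u with hx | hx
    · have : max (x - u) 0 = 0 := max_eq_right (by linarith)
      simp [this, indicator_of_notMem (notMem_Ioi.mpr hx)]
    · have hx0 : 0 ≤ x := le_trans hu hx.le
      have : max (x - u) 0 = x - u := max_eq_left (by linarith)
      rw [indicator_of_mem (mem_Ioi.mpr hx)]
      simp only [this, smul_eq_mul, hg']
      rw [Real.coe_toNNReal _ (exponentialPDFReal_nonneg one_pos x)]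
      rw [exponentialPDFReal, gammaPDFReal]
      simp only [if_pos hx0]
      simp [Real.Gamma_one]
      ring
  constructor
  · rw [hpdf_eq, integrable_withDensity_iff_integrable_coe_smul hmeas_pdf]
    rw [hind]
    exact hint.integrable_indicator measurableSet_Ioi
  · rw [hpdf_eq, integral_withDensity_eq_integral_smul hmeas_pdf]
    have : ∀ x, ((exponentialPDFReal 1 x).toNNReal : ℝ≥0) • max (x - u) 0
        = ((exponentialPDFReal 1 x).toNNReal : ℝ) • max (x - u) 0 := fun x => rfl
    simp_rw [this, hind]
    rw [integral_indicator measurableSet_Ioi, hval]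

/-- Expected sum of the `m` largest of `d` i.i.d. unit-mean exponential random variables
is at most `m * (log (d/m) + 1)`. -/
theorem expected_top_m_of_exponentials {Ω : Type*} [MeasurableSpace Ω]
    (P : Measure Ω) [IsProbabilityMeasure P] (d : ℕ) (hd : 1 ≤ d)
    (Z : Fin d → Ω → ℝ) (hZmeas : ∀ i, Measurable (Z i))
    (hZdist : ∀ i, Measure.map (Z i) P = expMeasure 1)
    (hZindep : iIndepFun Z P)
    (m : ℕ) (hm : 1 ≤ m) (hmd : m ≤ d)
    (Y : Ω → ℝ)
    (hYub : ∀ ω, ∀ s ∈ Finset.powersetCard m (Finset.univ : Finset (Fin d)),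
      ∑ i ∈ s, Z i ω ≤ Y ω)
    (hYmem : ∀ ω, ∃ s ∈ Finset.powersetCard m (Finset.univ : Finset (Fin d)),
      Y ω = ∑ i ∈ s, Z i ω) :
    (∫ ω, Y ω ∂P) ≤ m * (Real.log (d / m) + 1) := by
  have hm0 : (0:ℝ) < m := by exact_mod_cast hm
  have hd0 : (0:ℝ) < d := by exact_mod_cast hd
  have hdm1 : (1:ℝ) ≤ (d:ℝ) / m := (one_le_div hm0).mpr (by exact_mod_cast hmd)
  set u : ℝ := Real.log ((d:ℝ) / m) with hu_def
  have hu : 0 ≤ u := Real.log_nonneg hdm1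
  obtain ⟨htail_int, htail_val⟩ := exp_tail_aux hu
  have hcont : Continuous fun x : ℝ => max (x - u) 0 :=
    (continuous_id.sub continuous_const).max continuous_const
  -- each composed tail function is integrable with integral exp (-u)
  have hcomp_int : ∀ i, Integrable (fun ω => max (Z i ω - u) 0) P := by
    intro i
    have := (integrable_map_measure hcont.aestronglyMeasurable
      (hZmeas i).aemeasurable).mp (by rw [hZdist i]; exact htail_int)
    exact this
  have hcomp_val : ∀ i, ∫ ω, max (Z i ω - u) 0 ∂P = Real.exp (-u) := by
    intro i
    have := integral_map (hZmeas i).aemeasurable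
      (f := fun x => max (x - u) 0) (by rw [hZdist i]; exact hcont.aestronglyMeasurable)
    rw [hZdist i] at this
    rw [← this, htail_val]
  -- the dominating function
  set g : Ω → ℝ := fun ω => m * u + ∑ i, max (Z i ω - u) 0 with hg_def
  have hg_int : Integrable g P :=
    (integrable_const _).add (integrable_finset_sum _ (fun i _ => hcomp_int i))
  -- pointwise bound Y ≤ g
  have hYg : ∀ ω, Y ω ≤ g ω := by
    intro ω
    obtain ⟨s, hs, hY⟩ := hYmem ω
    have hscard : s.card = m := (Finset.mem_powersetCard.mp hs).2
    calc Y ω = ∑ i ∈ s, Z i ω := hY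
      _ ≤ ∑ i ∈ s, (u + max (Z i ω - u) 0) := by
          refine Finset.sum_le_sum fun i _ => ?_
          have := le_max_left (Z i ω - u) 0
          linarith
      _ = s.card * u + ∑ i ∈ s, max (Z i ω - u) 0 := by
          rw [Finset.sum_add_distrib, Finset.sum_const, nsmul_eq_mul]
      _ ≤ m * u + ∑ i, max (Z i ω - u) 0 := by
          rw [hscard]
          exact add_le_add (le_refl _) (Finset.sum_le_sum_of_subset_of_nonneg (Finset.subset_univ s)
            (fun i _ _ => le_max_right _ _))
  -- Y is a.e. nonneg
  have hZnn : ∀ i, ∀ᵐ ω ∂P, 0 ≤ Z i ω := by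
    intro i
    have hnull : P (Z i ⁻¹' Set.Iio 0) = 0 := by
      rw [← Measure.map_apply (hZmeas i) measurableSet_Iio, hZdist i]
      show volume.withDensity (exponentialPDF 1) (Set.Iio 0) = 0
      rw [withDensity_apply _ measurableSet_Iio]
      exact lintegral_exponentialPDF_of_nonpos le_rfl
    filter_upwards [measure_eq_zero_iff_ae_notMem.mp hnull] with ω hω
    exact not_lt.mp hω
  have hYnn : ∀ᵐ ω ∂P, 0 ≤ Y ω := by
    have : ∀ᵐ ω ∂P, ∀ i, 0 ≤ Z i ω := ae_all_iff.mpr hZnn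
    filter_upwards [this] with ω hω
    obtain ⟨s, _, hY⟩ := hYmem ω
    rw [hY]
    exact Finset.sum_nonneg fun i _ => hω i
  -- put together
  have hmain : (∫ ω, Y ω ∂P) ≤ ∫ ω, g ω ∂P :=
    integral_mono_of_nonneg hYnn hg_int (Filter.Eventually.of_forall hYg)
  have hgval : ∫ ω, g ω ∂P = m * u + d * Real.exp (-u) := by
    rw [hg_def]
    rw [integral_add (integrable_const _) (integrable_finset_sum _ (fun i _ => hcomp_int i))]
    rw [integral_const, integral_finset_sum _ (fun i _ => hcomp_int i)]
    simp [hcomp_val, Finset.card_univ, mul_comm]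
  have hexp : Real.exp (-u) = m / d := by
    rw [hu_def, Real.exp_neg, Real.exp_log (by positivity), inv_div]
  have : (d:ℝ) * Real.exp (-u) = m := by
    rw [hexp]; field_simp
  rw [hgval, this] at hmain
  calc (∫ ω, Y ω ∂P) ≤ m * u + m := hmain
    _ = m * (Real.log ((d:ℝ) / m) + 1) := by rw [hu_def]; ring
end

section
/- Let S ⊆ {0,1}^d be finite with ‖v‖₁ ≤ m for all v ∈ S, let ℓ̂_1,…,ℓ̂_T be nonnegative loss vectors, η_1 ≥ η_2 ≥ … ≥ η_T > 0, and let Z̃ have i.i.d. Exp(1) components. Define Ṽ_t^+ = argmin_{u∈S} u^⊤(η_t L̂_t − Z̃) with L̂_t = ∑_{s≤t} ℓ̂_s. Then for any v ∈ S, E_{Z̃}[∑_{t=1}^T (Ṽ_t^+ − v)^⊤ ℓ̂_t] ≤ m·(log(d/m) + 1)/η_T. -/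
open MeasureTheory ProbabilityTheory Real Set Filter
open scoped NNReal ENNReal

/-- `∫_{Ioi c} (x-c) e^{-x} dx = e^{-c}`, with integrability. -/
lemma exp_shift_int (c : ℝ) :
    IntegrableOn (fun x => (x - c) * Real.exp (-x)) (Set.Ioi c) volume ∧
      ∫ x in Set.Ioi c, (x - c) * Real.exp (-x) = Real.exp (-c) := by
  have hderiv : ∀ x ∈ Set.Ici c,
      HasDerivAt (fun y => -(y - c + 1) * Real.exp (-y)) ((x - c) * Real.exp (-x)) x := by
    intro x _
    have h1 : HasDerivAt (fun y : ℝ => -(y - c + 1)) (-1) x := by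
      exact (((hasDerivAt_id x).sub_const c).add_const 1).neg
    have h2 : HasDerivAt (fun y : ℝ => Real.exp (-y)) (-Real.exp (-x)) x := by
      simpa using (hasDerivAt_neg x).exp
    have h := h1.mul h2
    refine h.congr_deriv ?_
    ring
  have hpos : ∀ x ∈ Set.Ioi c, 0 ≤ (x - c) * Real.exp (-x) := by
    intro x hx
    have : c < x := hx
    exact mul_nonneg (by linarith) (Real.exp_pos _).le
  have htend : Tendsto (fun y => -(y - c + 1) * Real.exp (-y)) atTop (nhds 0) := by
    have h1 := Real.tendsto_pow_mul_exp_neg_atTop_nhds_zero 1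
    have h2 := Real.tendsto_exp_neg_atTop_nhds_zero
    have heq : (fun y : ℝ => -(y - c + 1) * Real.exp (-y)) =
        fun y => -(y ^ 1 * Real.exp (-y)) + (c - 1) * Real.exp (-y) := by
      funext y; ring
    rw [heq]
    simpa using h1.neg.add (h2.const_mul (c - 1))
  refine ⟨integrableOn_Ioi_deriv_of_nonneg' hderiv hpos htend, ?_⟩
  rw [integral_Ioi_of_hasDerivAt_of_nonneg' hderiv hpos htend]
  simp

/-- integral of `max (x - c) 0` against Exp(1). -/
lemma expMeasure_max_int {c : ℝ} (hc : 0 ≤ c) :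
    Integrable (fun x => max (x - c) 0) (expMeasure 1) ∧
      ∫ x, max (x - c) 0 ∂(expMeasure 1) = Real.exp (-c) := by
  have hpdf : ∀ x : ℝ, exponentialPDFReal 1 x = if 0 ≤ x then Real.exp (-x) else 0 := by
    intro x
    rw [exponentialPDFReal, gammaPDFReal]
    simp
  have hmeas : Measurable fun x => Real.toNNReal (exponentialPDFReal 1 x) :=
    (measurable_exponentialPDFReal 1).real_toNNReal
  have hμ : expMeasure 1
      = volume.withDensity fun x => ((Real.toNNReal (exponentialPDFReal 1 x) : ℝ≥0) : ℝ≥0∞) := by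
    rw [expMeasure, gammaMeasure]
    rfl
  have hsmul : (fun x => (Real.toNNReal (exponentialPDFReal 1 x) : ℝ≥0) • max (x - c) 0)
      = Set.indicator (Set.Ioi c) (fun x => (x - c) * Real.exp (-x)) := by
    funext x
    by_cases hx : c < x
    · rw [Set.indicator_of_mem (Set.mem_Ioi.mpr hx)]
      have h0x : (0 : ℝ) ≤ x := le_trans hc hx.le
      rw [NNReal.smul_def, hpdf x, if_pos h0x, Real.coe_toNNReal _ (Real.exp_pos _).le,
        max_eq_left (by linarith), smul_eq_mul]
      ring
    · rw [Set.indicator_of_notMem (by simpa using hx), NNReal.smul_def,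
        max_eq_right (by push_neg at hx; linarith)]
      simp
  obtain ⟨hIOn, hIval⟩ := exp_shift_int c
  constructor
  · rw [hμ, integrable_withDensity_iff_integrable_smul hmeas, hsmul]
    exact hIOn.integrable_indicator measurableSet_Ioi
  · rw [hμ, integral_withDensity_eq_integral_smul hmeas, hsmul,
      integral_indicator measurableSet_Ioi, hIval]

/-- Auxiliary perturbed potential for the FPL analysis. -/
noncomputable def fplPhi {d : ℕ} (lhat : ℕ → Fin d → ℝ) (η : ℕ → ℝ) (z : Fin d → ℝ)
    (t : ℕ) (u : Fin d → ℝ) : ℝ :=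
  ∑ i, u i * ((∑ s ∈ Finset.Icc 1 t, lhat s i) - (if t = 0 then 0 else (η t)⁻¹) * z i)

/-- Deterministic be-the-leader bound. -/
lemma fpl_det {d T : ℕ} (hT : 1 ≤ T) (mR c : ℝ) (hc0 : 0 ≤ c)
    (S : Finset (Fin d → ℝ)) (hS01 : ∀ v ∈ S, ∀ i, v i = 0 ∨ v i = 1)
    (hSm : ∀ v ∈ S, (∑ i, v i) ≤ mR)
    (lhat : ℕ → Fin d → ℝ) (hlhat : ∀ t i, 0 ≤ lhat t i)
    (η : ℕ → ℝ) (hηpos : ∀ t, 1 ≤ t → t ≤ T → 0 < η t)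
    (hηmono : ∀ s t, 1 ≤ s → s ≤ t → t ≤ T → η t ≤ η s)
    (z : Fin d → ℝ) (hz : ∀ i, 0 ≤ z i)
    (V : ℕ → Fin d → ℝ) (hVS : ∀ t, V t ∈ S)
    (hVmin : ∀ t, 1 ≤ t → t ≤ T → ∀ u ∈ S,
      (∑ i, V t i * (η t * (∑ s ∈ Finset.Icc 1 t, lhat s i) - z i)) ≤
        ∑ i, u i * (η t * (∑ s ∈ Finset.Icc 1 t, lhat s i) - z i))
    (v : Fin d → ℝ) (hv : v ∈ S) :
    (∑ t ∈ Finset.Icc 1 T, ∑ i, (V t i - v i) * lhat t i) ≤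
      (mR * c + ∑ i, max (z i - c) 0) / η T := by
  set κ : ℕ → ℝ := fun t => if t = 0 then 0 else (η t)⁻¹ with hκ
  set Mz : ℝ := mR * c + ∑ i, max (z i - c) 0 with hMz
  have hmR0 : 0 ≤ mR := by
    have := hSm v hv
    have hvn : 0 ≤ ∑ i, v i :=
      Finset.sum_nonneg fun i _ => by rcases hS01 v hv i with h | h <;> simp [h]
    linarith
  have hMz0 : 0 ≤ Mz := by
    have : 0 ≤ ∑ i, max (z i - c) 0 := Finset.sum_nonneg fun i _ => le_max_right _ _
    have := mul_nonneg hmR0 hc0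
    rw [hMz]; linarith
  -- minimality for Φ
  have hΦmin : ∀ t, 1 ≤ t → t ≤ T → ∀ u ∈ S, fplPhi lhat η z t (V t) ≤ fplPhi lhat η z t u := by
    intro t ht1 htT u hu
    have hη := hηpos t ht1 htT
    have hne : η t ≠ 0 := hη.ne'
    have hrw : ∀ w : Fin d → ℝ, fplPhi lhat η z t w =
        (η t)⁻¹ * ∑ i, w i * (η t * (∑ s ∈ Finset.Icc 1 t, lhat s i) - z i) := by
      intro w
      rw [fplPhi, Finset.mul_sum, if_neg (by omega : ¬ t = 0)]
      refine Finset.sum_congr rfl fun i _ => ?_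
      calc w i * ((∑ s ∈ Finset.Icc 1 t, lhat s i) - (η t)⁻¹ * z i)
          = ((η t)⁻¹ * η t) * (w i * (∑ s ∈ Finset.Icc 1 t, lhat s i))
            - (η t)⁻¹ * (w i * z i) := by rw [inv_mul_cancel₀ hne]; ring
        _ = (η t)⁻¹ * (w i * (η t * (∑ s ∈ Finset.Icc 1 t, lhat s i) - z i)) := by ring
    rw [hrw, hrw]
    exact mul_le_mul_of_nonneg_left (hVmin t ht1 htT u hu) (inv_nonneg.mpr hη.le)
  -- be-the-leader induction
  have btl : ∀ n, n ≤ T → ∀ u ∈ S,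
      (∑ t ∈ Finset.Icc 1 n, (fplPhi lhat η z t (V t) - fplPhi lhat η z (t - 1) (V t))) ≤
        fplPhi lhat η z n u := by
    intro n
    induction n with
    | zero =>
      intro _ u hu
      rw [show Finset.Icc 1 0 = ∅ from rfl, Finset.sum_empty]
      simp [fplPhi]
    | succ k ih =>
      intro hk u hu
      rw [Finset.sum_Icc_succ_top (by omega : 1 ≤ k + 1)]
      have h1 := ih (by omega) (V (k + 1)) (hVS (k + 1))
      have h2 := hΦmin (k + 1) (by omega) hk u hu
      simp only [Nat.add_sub_cancel]
      linarith
  have hbtl := btl T le_rfl v hv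
  -- expand the telescoping increments
  have hg : ∀ t, 1 ≤ t →
      fplPhi lhat η z t (V t) - fplPhi lhat η z (t - 1) (V t) =
        (∑ i, V t i * lhat t i) - (κ t - κ (t - 1)) * ∑ i, V t i * z i := by
    intro t ht
    obtain ⟨k, rfl⟩ : ∃ k, t = k + 1 := ⟨t - 1, by omega⟩
    simp only [Nat.add_sub_cancel]
    have expand : fplPhi lhat η z (k + 1) (V (k + 1)) - fplPhi lhat η z k (V (k + 1)) =
        ∑ i, (V (k + 1) i * lhat (k + 1) i - (κ (k + 1) - κ k) * (V (k + 1) i * z i)) := by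
      rw [fplPhi, fplPhi, ← Finset.sum_sub_distrib]
      refine Finset.sum_congr rfl fun i _ => ?_
      rw [Finset.sum_Icc_succ_top (by omega : 1 ≤ k + 1)]
      simp only [hκ]
      ring
    rw [expand, Finset.sum_sub_distrib, ← Finset.mul_sum]
  -- κ is nonneg and increasing on [0,T]
  have hκmono : ∀ t, 1 ≤ t → t ≤ T → κ (t - 1) ≤ κ t := by
    intro t ht1 htT
    rcases Nat.eq_or_lt_of_le ht1 with h | h
    · simp only [hκ, ← h]
      norm_num
      exact (hηpos 1 le_rfl (by omega)).le
    · have ht2 : 2 ≤ t := h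
      have hp1 : 0 < η (t - 1) := hηpos (t - 1) (by omega) (by omega)
      have hpt : 0 < η t := hηpos t ht1 htT
      have hmono := hηmono (t - 1) t (by omega) (by omega) htT
      simp only [hκ, if_neg (by omega : ¬ t = 0), if_neg (by omega : ¬ t - 1 = 0)]
      exact inv_anti₀ hpt hmono
  -- bound each V_t ⬝ z by Mz
  have hW : ∀ t, (∑ i, V t i * z i) ≤ Mz := by
    intro t
    have h1 : ∀ i, V t i * z i ≤ V t i * c + max (z i - c) 0 := by
      intro i
      rcases hS01 (V t) (hVS t) i with h | h
      · simp [h, le_max_right]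
      · simp only [h, one_mul]
        have := le_max_left (z i - c) 0
        linarith
    calc (∑ i, V t i * z i) ≤ ∑ i, (V t i * c + max (z i - c) 0) :=
          Finset.sum_le_sum fun i _ => h1 i
      _ = (∑ i, V t i) * c + ∑ i, max (z i - c) 0 := by
          rw [Finset.sum_add_distrib, ← Finset.sum_mul]
      _ ≤ mR * c + ∑ i, max (z i - c) 0 := by
          have := mul_le_mul_of_nonneg_right (hSm (V t) (hVS t)) hc0
          linarith
  -- telescoping sum of κ increments
  have hκtel0 : ∀ n : ℕ, (∑ t ∈ Finset.Icc 1 n, (κ t - κ (t - 1))) = κ n - κ 0 := by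
    intro n
    induction n with
    | zero => rw [show Finset.Icc 1 0 = ∅ from rfl, Finset.sum_empty]; ring
    | succ k ih =>
      rw [Finset.sum_Icc_succ_top (by omega : 1 ≤ k + 1), ih]
      simp only [Nat.add_sub_cancel]
      ring
  have hκtel : (∑ t ∈ Finset.Icc 1 T, (κ t - κ (t - 1))) = κ T := by
    rw [hκtel0]
    simp [hκ]
  -- bound the perturbation part
  have hpert : (∑ t ∈ Finset.Icc 1 T, (κ t - κ (t - 1)) * ∑ i, V t i * z i) ≤ κ T * Mz := by
    calc (∑ t ∈ Finset.Icc 1 T, (κ t - κ (t - 1)) * ∑ i, V t i * z i)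
        ≤ ∑ t ∈ Finset.Icc 1 T, (κ t - κ (t - 1)) * Mz := by
          refine Finset.sum_le_sum fun t ht => ?_
          rw [Finset.mem_Icc] at ht
          exact mul_le_mul_of_nonneg_left (hW t)
            (by linarith [hκmono t ht.1 ht.2])
      _ = κ T * Mz := by rw [← Finset.sum_mul, hκtel]
  -- Φ_T v ≤ v ⬝ L_T
  have hΦv : fplPhi lhat η z T v ≤ ∑ i, v i * (∑ s ∈ Finset.Icc 1 T, lhat s i) := by
    rw [fplPhi]
    refine Finset.sum_le_sum fun i _ => ?_
    have hvz : 0 ≤ v i * (κ T * z i) := by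
      rcases hS01 v hv i with h | h
      · simp [h]
      · simp only [h, one_mul]
        refine mul_nonneg ?_ (hz i)
        simp only [hκ, if_neg (by omega : ¬ T = 0)]
        exact inv_nonneg.mpr (hηpos T hT le_rfl).le
    have : (if T = 0 then (0:ℝ) else (η T)⁻¹) = κ T := by simp [hκ]
    rw [this]
    nlinarith [hvz]
  -- put everything together
  have hmain : (∑ t ∈ Finset.Icc 1 T, ∑ i, V t i * lhat t i) ≤
      (∑ i, v i * (∑ s ∈ Finset.Icc 1 T, lhat s i)) + κ T * Mz := by
    have hsum : (∑ t ∈ Finset.Icc 1 T, (fplPhi lhat η z t (V t) - fplPhi lhat η z (t - 1) (V t)))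
        = (∑ t ∈ Finset.Icc 1 T, ∑ i, V t i * lhat t i)
          - ∑ t ∈ Finset.Icc 1 T, (κ t - κ (t - 1)) * ∑ i, V t i * z i := by
      rw [← Finset.sum_sub_distrib]
      refine Finset.sum_congr rfl fun t ht => ?_
      rw [Finset.mem_Icc] at ht
      exact hg t ht.1
    rw [hsum] at hbtl
    linarith
  have hswap : (∑ t ∈ Finset.Icc 1 T, ∑ i, v i * lhat t i)
      = ∑ i, v i * (∑ s ∈ Finset.Icc 1 T, lhat s i) := by
    rw [Finset.sum_comm]
    exact Finset.sum_congr rfl fun i _ => by rw [Finset.mul_sum]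
  have hLHS : (∑ t ∈ Finset.Icc 1 T, ∑ i, (V t i - v i) * lhat t i)
      = (∑ t ∈ Finset.Icc 1 T, ∑ i, V t i * lhat t i)
        - ∑ i, v i * (∑ s ∈ Finset.Icc 1 T, lhat s i) := by
    rw [← hswap, ← Finset.sum_sub_distrib]
    refine Finset.sum_congr rfl fun t _ => ?_
    rw [← Finset.sum_sub_distrib]
    exact Finset.sum_congr rfl fun i _ => by ring
  have hκT : κ T = (η T)⁻¹ := by simp [hκ, if_neg (by omega : ¬ T = 0)]
  rw [hLHS, div_eq_inv_mul, ← hκT]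
  linarith

/-- Be-the-leader bound for FPL with i.i.d. Exp(1) perturbations and nonincreasing learning
rates: `E[∑ₜ (Ṽₜ⁺ − v)⊤ℓ̂ₜ] ≤ m (log(d/m) + 1) / η_T`. -/
theorem fpl_be_the_leader_exponential {Ω : Type*} [MeasurableSpace Ω]
    (P : Measure Ω) [IsProbabilityMeasure P] (d m T : ℕ)
    (hd : 1 ≤ d) (hm : 1 ≤ m) (hmd : m ≤ d) (hT : 1 ≤ T)
    (S : Finset (Fin d → ℝ)) (hS01 : ∀ v ∈ S, ∀ i, v i = 0 ∨ v i = 1)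
    (hSm : ∀ v ∈ S, (∑ i, v i) ≤ m)
    (lhat : ℕ → Fin d → ℝ) (hlhat : ∀ t i, 0 ≤ lhat t i)
    (η : ℕ → ℝ) (hηpos : ∀ t, 1 ≤ t → t ≤ T → 0 < η t)
    (hηmono : ∀ s t, 1 ≤ s → s ≤ t → t ≤ T → η t ≤ η s)
    (Z : Ω → Fin d → ℝ) (hZmeas : ∀ i, Measurable (fun ω => Z ω i))
    (hZdist : ∀ i, Measure.map (fun ω => Z ω i) P = expMeasure 1)
    (hZindep : iIndepFun (fun i ω => Z ω i) P)
    (Vp : ℕ → Ω → Fin d → ℝ)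
    (hVpS : ∀ t ω, Vp t ω ∈ S)
    (hVpmin : ∀ t, 1 ≤ t → t ≤ T → ∀ ω, ∀ u ∈ S,
      (∑ i, Vp t ω i * (η t * (∑ s ∈ Finset.Icc 1 t, lhat s i) - Z ω i)) ≤
        ∑ i, u i * (η t * (∑ s ∈ Finset.Icc 1 t, lhat s i) - Z ω i))
    (hint : ∀ t, Integrable (fun ω => ∑ i, Vp t ω i * lhat t i) P)
    (v : Fin d → ℝ) (hv : v ∈ S) :
    (∫ ω, ∑ t ∈ Finset.Icc 1 T, ∑ i, (Vp t ω i - v i) * lhat t i ∂P) ≤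
      m * (Real.log (d / m) + 1) / η T := by
  have hm0 : (0 : ℝ) < m := by exact_mod_cast hm
  have hd0 : (0 : ℝ) < d := by exact_mod_cast lt_of_lt_of_le Nat.zero_lt_one hd
  set c : ℝ := Real.log (d / m) with hc_def
  have hdm1 : (1 : ℝ) ≤ (d : ℝ) / m := (one_le_div hm0).mpr (by exact_mod_cast hmd)
  have hc0 : 0 ≤ c := Real.log_nonneg hdm1
  have hηT : 0 < η T := hηpos T hT le_rfl
  -- a.e. nonnegativity of Z
  have hZae : ∀ᵐ ω ∂P, ∀ i, 0 ≤ Z ω i := by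
    rw [MeasureTheory.ae_all_iff]
    intro i
    have hset : {ω | ¬ 0 ≤ Z ω i} = (fun ω => Z ω i) ⁻¹' (Set.Iio 0) := by
      ext ω; simp [not_le]
    have hexp0 : (expMeasure 1) (Set.Iio 0) = 0 := by
      rw [expMeasure, gammaMeasure, withDensity_apply _ measurableSet_Iio]
      exact lintegral_gammaPDF_of_nonpos le_rfl
    have key : P {ω | ¬ 0 ≤ Z ω i} = 0 := by
      rw [hset, ← Measure.map_apply (hZmeas i) measurableSet_Iio, hZdist i]
      exact hexp0
    exact ae_iff.mpr key
  -- integrability and values of the max terms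
  have hgcont : Continuous fun x : ℝ => max (x - c) 0 :=
    (continuous_id.sub continuous_const).max continuous_const
  have hZint : ∀ i, Integrable (fun ω => max (Z ω i - c) 0) P := by
    intro i
    have h1 := (expMeasure_max_int hc0).1
    rw [← hZdist i] at h1
    exact (integrable_map_measure hgcont.aestronglyMeasurable (hZmeas i).aemeasurable).mp h1
  have hZval : ∀ i, (∫ ω, max (Z ω i - c) 0 ∂P) = Real.exp (-c) := by
    intro i
    have h2 := (expMeasure_max_int hc0).2
    rw [← hZdist i, integral_map (hZmeas i).aemeasurable hgcont.aestronglyMeasurable] at h2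
    exact h2
  -- integrand bound a.e.
  have claim : ∀ᵐ ω ∂P,
      (∑ t ∈ Finset.Icc 1 T, ∑ i, (Vp t ω i - v i) * lhat t i) ≤
        ((m : ℝ) * c + ∑ i, max (Z ω i - c) 0) / η T := by
    filter_upwards [hZae] with ω hω
    exact fpl_det hT m c hc0 S hS01 hSm lhat hlhat η hηpos hηmono (Z ω) hω
      (fun t => Vp t ω) (fun t => hVpS t ω)
      (fun t ht1 htT u hu => hVpmin t ht1 htT ω u hu) v hv
  -- integrability of both sides
  have hAint : Integrable (fun ω => ∑ t ∈ Finset.Icc 1 T,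
      ∑ i, (Vp t ω i - v i) * lhat t i) P := by
    refine integrable_finset_sum _ fun t _ => ?_
    have h := (hint t).sub (integrable_const (∑ i, v i * lhat t i))
    simp only [sub_mul, Finset.sum_sub_distrib]
    exact h
  have hBint : Integrable (fun ω => ((m : ℝ) * c + ∑ i, max (Z ω i - c) 0) / η T) P := by
    refine Integrable.div_const ?_ _
    exact (integrable_const _).add (integrable_finset_sum _ fun i _ => hZint i)
  have hle := integral_mono_ae hAint hBint claim
  refine le_trans hle ?_
  -- compute the RHS integral
  rw [integral_div, integral_add (integrable_const _) (integrable_finset_sum _ fun i _ => hZint i),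
    integral_const, integral_finset_sum _ fun i _ => hZint i]
  simp only [measure_univ, probReal_univ, ENNReal.toReal_one, one_smul, hZval, Finset.sum_const,
    Finset.card_univ, Fintype.card_fin, nsmul_eq_mul]
  have hexpc : Real.exp (-c) = m / d := by
    rw [hc_def, Real.exp_neg, Real.exp_log (div_pos hd0 hm0), inv_div]
  rw [hexpc]
  have : (d : ℝ) * ((m : ℝ) / d) = m := by field_simp
  rw [this, show (m : ℝ) * c + (m : ℝ) = (m : ℝ) * (c + 1) from by ring]
end

section
/- Let D > 0, let s_1,…,s_T be nonnegative reals with s_t ≤ 1/η_t where η_t = √(D/S_{t-1}), S_0 = 1/D, S_t = S_0 + ∑_{k≤t} s_k. Then ∑_{t=1}^T η_t s_t ≤ 4D/η_T. -/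
/-- Adaptive learning-rate schedule of FPL-TrIX: with `η t = √(D / S (t-1))`, `S 0 = 1/D` and
`0 ≤ s t ≤ 1/η t`, one has `∑ₜ ηₜ sₜ ≤ 4 D / η_T`. -/
theorem adaptive_rate_sum_bound (D : ℝ) (hD : 0 < D) (T : ℕ) (hT : 1 ≤ T)
    (s S η : ℕ → ℝ)
    (hS0 : S 0 = 1 / D)
    (hSdef : ∀ t : ℕ, S (t + 1) = S t + s (t + 1))
    (hη : ∀ t : ℕ, 1 ≤ t → η t = Real.sqrt (D / S (t - 1)))
    (hs : ∀ t : ℕ, 1 ≤ t → t ≤ T → 0 ≤ s t ∧ s t ≤ 1 / η t) :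
    (∑ t ∈ Finset.Icc 1 T, η t * s t) ≤ 4 * D / η T := by
  have hD' : (0:ℝ) < 1 / D := by positivity
  -- S is bounded below by 1/D on [0, T]
  have hSlb : ∀ t, t ≤ T → 1 / D ≤ S t := by
    intro t
    induction t with
    | zero => intro _; rw [hS0]
    | succ n ih =>
      intro h
      have hn : n ≤ T := Nat.le_of_succ_le h
      have hsn := (hs (n+1) (Nat.succ_le_succ (Nat.zero_le n)) h).1
      rw [hSdef]; linarith [ih hn]
  have hSpos : ∀ t, t ≤ T → 0 < S t := fun t ht => lt_of_lt_of_le hD' (hSlb t ht)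
  have sqrtD_pos : 0 < Real.sqrt D := Real.sqrt_pos.2 hD
  -- η t = √D / √(S (t-1))
  have hηval : ∀ t, 1 ≤ t → t ≤ T → η t = Real.sqrt D / Real.sqrt (S (t-1)) := by
    intro t ht htT
    rw [hη t ht, Real.sqrt_div hD.le]
  have hηpos : ∀ t, 1 ≤ t → t ≤ T → 0 < η t := by
    intro t ht htT
    rw [hηval t ht htT]
    have : 0 < S (t-1) := hSpos _ (le_trans (Nat.sub_le t 1) htT)
    positivity
  -- s t ≤ S (t-1)
  have hsleS : ∀ t, 1 ≤ t → t ≤ T → s t ≤ S (t-1) := by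
    intro t ht htT
    have hprev : t - 1 ≤ T := le_trans (Nat.sub_le t 1) htT
    have hSp := hSpos _ hprev
    have hSl := hSlb _ hprev
    have h1 : s t ≤ 1 / η t := (hs t ht htT).2
    rw [hηval t ht htT] at h1
    have h2 : 1 / (Real.sqrt D / Real.sqrt (S (t-1))) = Real.sqrt (S (t-1) / D) := by
      rw [Real.sqrt_div (hSp.le), one_div, inv_div]
    rw [h2] at h1
    refine h1.trans ?_
    have h3 : S (t-1) / D ≤ (S (t-1))^2 := by
      rw [div_le_iff₀ hD]
      have : 1 ≤ S (t-1) * D := by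
        have := (div_le_iff₀ hD).mp hSl
        linarith
      nlinarith
    calc Real.sqrt (S (t-1) / D) ≤ Real.sqrt ((S (t-1))^2) := Real.sqrt_le_sqrt h3
      _ = S (t-1) := Real.sqrt_sq hSp.le
  -- S t ≤ 2 * S (t-1) and S (t-1) ≤ S t for 1 ≤ t ≤ T
  have hstep : ∀ t, 1 ≤ t → t ≤ T → S t = S (t-1) + s t := by
    intro t ht htT
    obtain ⟨n, rfl⟩ := Nat.exists_eq_add_of_le ht
    simp only [Nat.add_sub_cancel_left] at *
    rw [Nat.add_comm 1 n, hSdef n]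
  set C : ℝ := 2 * Real.sqrt 2 * Real.sqrt D with hC
  have hCpos : 0 < C := by positivity
  -- per-step bound
  have key : ∀ t, 1 ≤ t → t ≤ T →
      η t * s t ≤ C * (Real.sqrt (S t) - Real.sqrt (S (t-1))) := by
    intro t ht htT
    have hprev : t - 1 ≤ T := le_trans (Nat.sub_le t 1) htT
    set a := Real.sqrt (S (t-1)) with ha
    set b := Real.sqrt (S t) with hb
    have hapos : 0 < a := Real.sqrt_pos.2 (hSpos _ hprev)
    have hbpos : 0 < b := Real.sqrt_pos.2 (hSpos _ htT)
    have ha2 : a^2 = S (t-1) := Real.sq_sqrt (hSpos _ hprev).le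
    have hb2 : b^2 = S t := Real.sq_sqrt (hSpos _ htT).le
    have hsnn := (hs t ht htT).1
    have hseq : s t = b^2 - a^2 := by rw [ha2, hb2, hstep t ht htT]; ring
    have hab : a ≤ b := by
      apply Real.sqrt_le_sqrt
      rw [hstep t ht htT]; linarith
    have hdou : b^2 ≤ 2 * a^2 := by
      rw [ha2, hb2, hstep t ht htT]
      linarith [hsleS t ht htT]
    have hb2a : b ≤ Real.sqrt 2 * a := by
      have : b = Real.sqrt (b^2) := (Real.sqrt_sq hbpos.le).symm
      rw [this, ← Real.sqrt_sq hapos.le, ← Real.sqrt_mul (by norm_num : (0:ℝ) ≤ 2)]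
      exact Real.sqrt_le_sqrt (by nlinarith)
    rw [hηval t ht htT, hseq, ← ha]
    rw [div_mul_eq_mul_div, div_le_iff₀ hapos]
    have hsq2 : (1:ℝ) ≤ Real.sqrt 2 := by
      rw [show (1:ℝ) = Real.sqrt 1 by simp]
      exact Real.sqrt_le_sqrt (by norm_num)
    have hbma : 0 ≤ b - a := by linarith
    have hkey : b + a ≤ 2 * Real.sqrt 2 * a := by nlinarith
    have : Real.sqrt D * (b^2 - a^2) = Real.sqrt D * (b - a) * (b + a) := by ring
    rw [this, hC]
    have h1 : Real.sqrt D * (b - a) * (b + a) ≤ Real.sqrt D * (b - a) * (2 * Real.sqrt 2 * a) := by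
      apply mul_le_mul_of_nonneg_left hkey
      positivity
    calc Real.sqrt D * (b - a) * (b + a)
        ≤ Real.sqrt D * (b - a) * (2 * Real.sqrt 2 * a) := h1
      _ = 2 * Real.sqrt 2 * Real.sqrt D * (b - a) * a := by ring
  -- telescoping sum
  have hsum : ∀ N, N ≤ T → (∑ t ∈ Finset.Icc 1 N, η t * s t) ≤
      C * (Real.sqrt (S N) - Real.sqrt (S 0)) := by
    intro N
    induction N with
    | zero => intro _; simp
    | succ n ih =>
      intro h
      have hn : n ≤ T := Nat.le_of_succ_le h
      rw [Finset.sum_Icc_succ_top (Nat.succ_le_succ (Nat.zero_le n))]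
      have h1 := key (n+1) (Nat.succ_le_succ (Nat.zero_le n)) h
      simp only [Nat.add_sub_cancel] at h1
      have := ih hn
      linarith
  have hfinal := hsum T le_rfl
  -- bound RHS
  have hTpos : 0 < η T := hηpos T hT le_rfl
  have hprev : T - 1 ≤ T := Nat.sub_le T 1
  set a := Real.sqrt (S (T-1)) with ha
  have hapos : 0 < a := Real.sqrt_pos.2 (hSpos _ hprev)
  have hrhs : 4 * D / η T = 4 * Real.sqrt D * a := by
    have hDsq : Real.sqrt D * Real.sqrt D = D := Real.mul_self_sqrt hD.le
    rw [hηval T hT le_rfl, ← ha, div_div_eq_mul_div, div_eq_iff (ne_of_gt sqrtD_pos)]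
    linear_combination (-4 : ℝ) * a * hDsq
  rw [hrhs]
  refine hfinal.trans ?_
  -- √(S T) ≤ √2 * a
  have hb2a : Real.sqrt (S T) ≤ Real.sqrt 2 * a := by
    have hdou : S T ≤ 2 * S (T-1) := by
      rw [hstep T hT le_rfl]; linarith [hsleS T hT le_rfl]
    calc Real.sqrt (S T) ≤ Real.sqrt (2 * S (T-1)) := Real.sqrt_le_sqrt hdou
      _ = Real.sqrt 2 * a := Real.sqrt_mul (by norm_num) _
  have hS0nn : 0 ≤ Real.sqrt (S 0) := Real.sqrt_nonneg _
  have h22 : Real.sqrt 2 * Real.sqrt 2 = 2 := Real.mul_self_sqrt (by norm_num)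
  have hsq2nn : (0:ℝ) ≤ Real.sqrt 2 := Real.sqrt_nonneg _
  calc C * (Real.sqrt (S T) - Real.sqrt (S 0))
      ≤ C * Real.sqrt (S T) := by nlinarith
    _ ≤ C * (Real.sqrt 2 * a) := by exact mul_le_mul_of_nonneg_left hb2a hCpos.le
    _ = 4 * Real.sqrt D * a := by rw [hC]; linear_combination 2 * Real.sqrt D * a * h22
end
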